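/- Let λ ∈ ℂ with |λ| = 1 and c > 0. Define P = {(z₁, z₂) ∈ ℂ² : |z₁| ≥ c ∧ ⟨λz₁, z₂⟩ ≥ 0}, where ⟨u,v⟩ = Re(u · conj(v)). Let J be the 2×2 Jordan block with eigenvalue λ, so J(z₁,z₂) = (λz₁ + z₂, λz₂). Then JP ⊆ P. -/

import Mathlib

theorem stmt_10 (l : ℂ) (hl : ‖l‖ = 1) (c : ℝ) (hc : 0 < c)
    (P : Set (ℂ × ℂ))
    (hP : P = {z | c ≤ ‖z.1‖ ∧ 0 ≤ (l * z.1 * starRingEnd ℂ z.2).re}) :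
    ∀ z ∈ P, (l * z.1 + z.2, l * z.2) ∈ P := by
  subst hP
  rintro ⟨z1, z2⟩ ⟨h1, h2⟩
  simp only [Set.mem_setOf_eq] at *
  have hnl : Complex.normSq l = 1 := by
    have := Complex.sq_norm l
    rw [hl] at this; linarith
  constructor
  · have key : (‖z1‖)^2 ≤ (‖l * z1 + z2‖)^2 := by
      rw [Complex.sq_norm, Complex.sq_norm, Complex.normSq_add, Complex.normSq_mul, hnl]
      have := Complex.normSq_nonneg z2
      nlinarith [h2]
    have h0 := norm_nonneg (l * z1 + z2)
    nlinarith
  · have hll : l * starRingEnd ℂ l = 1 := by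
      rw [Complex.mul_conj, hnl]; simp
    have h22 := Complex.mul_conj z2
    have heq : l * (l * z1 + z2) * starRingEnd ℂ (l * z2)
        = l * z1 * starRingEnd ℂ z2 + (Complex.normSq z2 : ℂ) := by
      rw [map_mul]
      linear_combination (l * z1 * starRingEnd ℂ z2 + (Complex.normSq z2 : ℂ)) * hll + starRingEnd ℂ l * l * h22
    rw [heq, Complex.add_re]
    have : ((Complex.normSq z2 : ℂ)).re = Complex.normSq z2 := by simp
    rw [this]
    exact add_nonneg h2 (Complex.normSq_nonneg z2)
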